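/- Let N ≥ 2 and let Λ = {ℓ, ℓ+1, …, r} be a contiguous segment with ℓ < r (no wrap-around). Then the truncated imaginary-hopping operator H_{ImHop,Λ} := (i/2) Σ_{j=ℓ}^{r−1} (s_j† s_{j+1} − s_{j+1}† s_j) satisfies H_{ImHop,Λ} |W⟩ = (i/2)(n_ℓ − n_r) |W⟩, where n_j = s_j† s_j. -/

import Mathlib

open scoped BigOperators

noncomputable section

/-- Configurations of `N` qubits. -/
abbrev Cfg (N : ℕ) := Fin N → Fin 2

/-- The `N`-qubit Hilbert space `⊗_{j=1}^N ℂ²`, identified with `ℂ^(Fin N → Fin 2)`. -/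
abbrev QS (N : ℕ) := EuclideanSpace ℂ (Cfg N)

/-- Computational basis state `|t⟩`. -/
def ket {N : ℕ} (t : Cfg N) : QS N := EuclideanSpace.single t 1

/-- Configuration with a single `1` at site `j`. -/
def eConf {N : ℕ} (j : Fin N) : Cfg N := fun k => if k = j then 1 else 0

/-- The all-zero product state `|0̄⟩`. -/
def zeroKet (N : ℕ) : QS N := ket (fun _ => 0)

/-- The W state `|W⟩ = (1/√N) ∑_j |e_j⟩`. -/
def Wst (N : ℕ) : QS N := (Real.sqrt N : ℂ)⁻¹ • ∑ j : Fin N, ket (eConf j)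

/-- Hard-core boson creation operator `s_j† = |1⟩⟨0|` acting at site `j`. -/
def aDag {N : ℕ} (j : Fin N) : QS N →ₗ[ℂ] QS N where
  toFun ψ := WithLp.toLp 2 (fun s => if s j = 1 then ψ (Function.update s j 0) else 0)
  map_add' ψ φ := by ext s; by_cases h : s j = 1 <;> simp [h]
  map_smul' c ψ := by ext s; by_cases h : s j = 1 <;> simp [h]

/-- Hard-core boson annihilation operator `s_j = |0⟩⟨1|` acting at site `j`. -/
def aOp {N : ℕ} (j : Fin N) : QS N →ₗ[ℂ] QS N where
  toFun ψ := WithLp.toLp 2 (fun s => if s j = 0 then ψ (Function.update s j 1) else 0)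
  map_add' ψ φ := by ext s; by_cases h : s j = 0 <;> simp [h]
  map_smul' c ψ := by ext s; by_cases h : s j = 0 <;> simp [h]

/-- Number operator `n_j = s_j† s_j = |1⟩⟨1|_j`. -/
def nOp {N : ℕ} (j : Fin N) : QS N →ₗ[ℂ] QS N := aDag j ∘ₗ aOp j

/-- The imaginary-hopping Hamiltonian
`H_ImHop = (i/2) ∑_{j=1}^N (s_j† s_{j+1} − s_{j+1}† s_j)` on the periodic chain. -/
def HImHop (N : ℕ) [NeZero N] : QS N →ₗ[ℂ] QS N :=
  (Complex.I / 2) • ∑ j : Fin N, (aDag j ∘ₗ aOp (j + 1) - aDag (j + 1) ∘ₗ aOp j)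

lemma ket_apply {N : ℕ} (t s : Cfg N) : ket t s = if s = t then 1 else 0 :=
  EuclideanSpace.single_apply t 1 s

lemma aOp_eConf {N : ℕ} (j k : Fin N) :
    aOp j (ket (eConf k)) = if j = k then ket (fun _ => 0) else 0 := by
  ext s
  show (if s j = 0 then ket (eConf k) (Function.update s j 1) else 0) = _
  rw [apply_ite (fun v : QS N => v s)]
  by_cases hsj : s j = 0
  · simp only [hsj, if_true, ket_apply]
    by_cases hjk : j = k
    · subst hjk
      by_cases hs : s = fun _ => 0
      · subst hs
        have : Function.update (fun _ : Fin N => (0 : Fin 2)) j 1 = eConf j := by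
          funext x
          by_cases hx : x = j <;> simp [Function.update, hx, eConf]
        simp [this]
      · have : Function.update s j 1 ≠ eConf j := by
          intro h
          apply hs; funext x
          by_cases hx : x = j
          · subst hx; exact hsj
          · have := congrFun h x
            simpa [Function.update, hx, eConf] using this
        simp [this, hs]
    · have : Function.update s j 1 ≠ eConf k := by
        intro h
        have := congrFun h j
        simp [Function.update, eConf, hjk] at this
      simp [this, hjk]
  · by_cases hjk : j = k
    · subst hjk
      have : s ≠ fun _ => 0 := fun h => hsj (by rw [h])
      simp [hsj, ket_apply, this]
    · simp [hsj, hjk]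

lemma aDag_zero {N : ℕ} (j : Fin N) :
    aDag j (ket (fun _ => 0)) = ket (eConf j) := by
  ext s
  show (if s j = 1 then ket (fun _ => (0:Fin 2)) (Function.update s j 0) else 0) = _
  by_cases hsj : s j = 1
  · simp only [hsj, if_true, ket_apply]
    by_cases hs : s = eConf j
    · subst hs
      have : Function.update (eConf j) j (0:Fin 2) = fun _ => 0 := by
        funext x; by_cases hx : x = j <;> simp [Function.update, hx, eConf]
      simp [this]
    · have : Function.update s j (0:Fin 2) ≠ fun _ => 0 := by
        intro h
        apply hs; funext x
        by_cases hx : x = j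
        · subst hx; simp [hsj, eConf]
        · have := congrFun h x
          simp [Function.update, hx] at this
          simp [eConf, hx, this]
      simp [this, hs]
  · have : s ≠ eConf j := by
      intro h; apply hsj; rw [h]; simp [eConf]
    simp [hsj, ket_apply, this]

lemma comp_sum {N : ℕ} (j j' : Fin N) :
    (aDag j ∘ₗ aOp j') (∑ k : Fin N, ket (eConf k)) = ket (eConf j) := by
  rw [LinearMap.comp_apply, map_sum]
  have : ∑ k : Fin N, aOp j' (ket (eConf k)) = ket (fun _ => 0) := by
    simp_rw [aOp_eConf]
    simp [Finset.sum_ite_eq]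
  rw [this, aDag_zero]

/-- For a contiguous segment `Λ = {ℓ,…,r}` (no wrap-around), the truncated
imaginary-hopping operator `H_{ImHop,Λ} = (i/2) ∑_{j=ℓ}^{r−1} (s_j† s_{j+1} − s_{j+1}† s_j)`
acts on the W state as the boundary operator `(i/2)(n_ℓ − n_r)`. -/
theorem truncated_HImHop_boundary_action (N : ℕ) [NeZero N] (hN : 2 ≤ N)
    (ℓ r : Fin N) (hlr : ℓ < r) :
    ((Complex.I / 2) •
        ∑ j : Fin N,
          if ℓ ≤ j ∧ j < r then aDag j ∘ₗ aOp (j + 1) - aDag (j + 1) ∘ₗ aOp j else 0)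
      (Wst N)
    = ((Complex.I / 2) • (nOp ℓ - nOp r)) (Wst N) := by
  set S : QS N := ∑ k : Fin N, ket (eConf k) with hS
  set G : ℕ → QS N := fun i => if h : i < N then ket (eConf ⟨i, h⟩) else 0 with hG
  have hval : ∀ j : Fin N, j < r → ((j + 1 : Fin N)).val = j.val + 1 := by
    intro j hj
    have h1 : j.val + 1 < N := by
      have := hj; rw [Fin.lt_def] at this; omega
    simp [Fin.add_def, Fin.val_one', Nat.mod_eq_of_lt (by omega : 1 < N),
      Nat.mod_eq_of_lt h1]
  have key : (∑ j : Fin N,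
      if ℓ ≤ j ∧ j < r then aDag j ∘ₗ aOp (j + 1) - aDag (j + 1) ∘ₗ aOp j else 0) S
      = ket (eConf ℓ) - ket (eConf r) := by
    rw [LinearMap.sum_apply]
    have step1 : ∀ j : Fin N,
        (if ℓ ≤ j ∧ j < r then aDag j ∘ₗ aOp (j + 1) - aDag (j + 1) ∘ₗ aOp j else 0) S
        = (fun i => if ℓ.val ≤ i ∧ i < r.val then G i - G (i + 1) else 0) j.val := by
      intro j
      by_cases h : ℓ ≤ j ∧ j < r
      · have hc : ℓ.val ≤ j.val ∧ j.val < r.val := ⟨h.1, h.2⟩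
        have hj1 : j.val + 1 < N := by omega
        have hGj : G j.val = ket (eConf j) := by simp [hG, j.isLt]
        have hGj1 : G (j.val + 1) = ket (eConf (j + 1)) := by
          have hv := hval j h.2
          simp only [hG, dif_pos hj1]
          rw [show (⟨j.val + 1, hj1⟩ : Fin N) = j + 1 from Fin.ext (by rw [hv])]
        simp only [if_pos h, if_pos hc, LinearMap.sub_apply]
        rw [comp_sum j (j+1), comp_sum (j+1) j, hGj, hGj1]
      · have hc : ¬ (ℓ.val ≤ j.val ∧ j.val < r.val) := by
          rw [Fin.le_def, Fin.lt_def] at h; exact h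
        simp [if_neg h, if_neg hc]
    rw [Finset.sum_congr rfl (fun j _ => step1 j)]
    rw [Fin.sum_univ_eq_sum_range (fun i => if ℓ.val ≤ i ∧ i < r.val then G i - G (i+1) else 0) N]
    have hsub : Finset.Ico ℓ.val r.val ⊆ Finset.range N := by
      intro i hi
      simp only [Finset.mem_Ico] at hi
      exact Finset.mem_range.2 (lt_of_lt_of_le (lt_of_lt_of_le hi.2 r.isLt.le) le_rfl)
    rw [← Finset.sum_subset hsub (fun x _ hx => by
      simp only [Finset.mem_Ico, not_and, not_lt] at hx
      by_cases h1 : ℓ.val ≤ x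
      · simp [not_lt.2 (hx h1)]
      · simp [h1])]
    have congr1 : ∑ i ∈ Finset.Ico ℓ.val r.val,
        (if ℓ.val ≤ i ∧ i < r.val then G i - G (i+1) else 0)
        = ∑ i ∈ Finset.Ico ℓ.val r.val, (G i - G (i+1)) := by
      refine Finset.sum_congr rfl fun i hi => ?_
      simp only [Finset.mem_Ico] at hi
      rw [if_pos hi]
    rw [congr1]
    have tele : ∑ i ∈ Finset.Ico ℓ.val r.val, (G (i+1) - G i) = G r.val - G ℓ.val := by
      rw [Finset.sum_Ico_eq_sub _ (le_of_lt hlr), Finset.sum_range_sub, Finset.sum_range_sub]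
      abel
    have : ∑ i ∈ Finset.Ico ℓ.val r.val, (G i - G (i+1))
        = -(∑ i ∈ Finset.Ico ℓ.val r.val, (G (i+1) - G i)) := by
      rw [← Finset.sum_neg_distrib]
      exact Finset.sum_congr rfl fun i _ => (neg_sub _ _).symm
    rw [this, tele, neg_sub]
    simp [hG, ℓ.isLt, r.isLt]
  have hW : Wst N = (Real.sqrt N : ℂ)⁻¹ • S := rfl
  rw [hW]
  rw [LinearMap.smul_apply, LinearMap.smul_apply, map_smul, map_smul,
    LinearMap.sub_apply, key]
  rw [show nOp ℓ S = ket (eConf ℓ) from comp_sum ℓ ℓ,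
      show nOp r S = ket (eConf r) from comp_sum r r]


end
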